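/- Let p be a prime, let a and h be positive integers, and let m be an integer not divisible by p. Then for every integer d with −h+1 ≤ d ≤ h·p^a, the following equality holds in ℤ/pℤ: ∑_{j=0}^{h+1} (binom(h+1, j) − m·[j = h]) · ∑_{k=0}^{p^a−1} binom((h+1)k, k+d+j)·(m^k)⁻¹ = [p^a divides d+h] · binom(h+1, (d+h)/p^a + 1), where [P] is 1 if the condition P holds and 0 otherwise. -/

import Mathlib

/-- Binomial coefficient with an integer lower index: zero for negative lower index. -/
def ibinom (n : ℕ) (j : ℤ) : ℕ := if 0 ≤ j then n.choose j.toNat else 0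

lemma ibinom_succ (n : ℕ) (s : ℤ) : ibinom (n+1) (s+1) = ibinom n s + ibinom n (s+1) := by
  unfold ibinom
  rcases lt_trichotomy s (-1) with h | h | h
  · rw [if_neg (by omega), if_neg (by omega), if_neg (by omega)]
  · subst h; norm_num
  · have h0 : 0 ≤ s := by omega
    rw [if_pos (by omega), if_pos h0, if_pos (by omega)]
    have h1 : (s+1).toNat = s.toNat + 1 := by omega
    rw [h1, Nat.choose_succ_succ]

lemma ibinom_vander (r n : ℕ) (t : ℤ) :
    ibinom (n + r) (t + r) = ∑ j ∈ Finset.range (r+1), r.choose j * ibinom n (t + j) := by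
  induction r generalizing t with
  | zero => simp
  | succ r ih =>
    have e1 : ibinom (n + (r+1)) (t + (r+1 : ℕ)) = ibinom (n+r) (t+r) + ibinom (n+r) ((t+1)+r) := by
      have h : (t + ((r:ℕ)+1 : ℕ) : ℤ) = (t + r) + 1 := by push_cast; ring
      rw [h, ← add_assoc, ibinom_succ]
      have h2 : ((t+1)+r : ℤ) = (t + r) + 1 := by ring
      rw [h2]
    rw [e1, ih t, ih (t+1)]
    rw [Finset.sum_range_succ' (fun j => (r+1).choose j * ibinom n (t + j))]
    have pascal : ∀ j, (r+1).choose (j+1) = r.choose j + r.choose (j+1) :=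
      fun j => Nat.choose_succ_succ r j
    simp only [pascal, add_mul, Finset.sum_add_distrib, Nat.choose_zero_right, one_mul]
    have e2 : ∑ j ∈ Finset.range (r+1), r.choose j * ibinom n (t + (j+1 : ℕ)) =
        ∑ j ∈ Finset.range (r+1), r.choose j * ibinom n ((t+1) + j) := by
      apply Finset.sum_congr rfl; intro j _; congr 1; push_cast; ring
    have e3 : ∑ j ∈ Finset.range (r+1), r.choose (j+1) * ibinom n (t + (j+1:ℕ)) +
        r.choose 0 * ibinom n (t + (0:ℕ)) =
        ∑ j ∈ Finset.range (r+1), r.choose j * ibinom n (t + j) := by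
      rw [← Finset.sum_range_succ' (fun j => r.choose j * ibinom n (t + j)) (r+1),
        Finset.sum_range_succ]
      simp
    simp only [Nat.choose_zero_right, one_mul] at e3
    rw [← e2, ← e3]
    ring

lemma lucas_pow (p : ℕ) [Fact p.Prime] (A : ℕ) : ∀ (a n : ℕ),
    (((A * p ^ a).choose n : ℕ) : ZMod p) =
      if p ^ a ∣ n then ((A.choose (n / p ^ a) : ℕ) : ZMod p) else 0 := by
  intro a
  induction a with
  | zero => simp
  | succ a ih =>
    intro n
    have hp : 0 < p := (Fact.out : p.Prime).pos
    have hdvd : p ∣ A * p ^ (a+1) := Dvd.dvd.mul_left (dvd_pow_self p (Nat.succ_ne_zero a)) A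
    have hmod : (A * p ^ (a+1)) % p = 0 := Nat.mod_eq_zero_of_dvd hdvd
    have hdiv : (A * p ^ (a+1)) / p = A * p ^ a := by
      rw [pow_succ, ← mul_assoc, Nat.mul_div_cancel _ hp]
    have key := (Choose.choose_modEq_choose_mod_mul_choose_div
      (p := p) (n := A * p ^ (a+1)) (k := n))
    have key2 : (((A * p ^ (a+1)).choose n : ℕ) : ZMod p) =
        ((Nat.choose 0 (n % p) * Nat.choose (A * p ^ a) (n / p) : ℕ) : ZMod p) := by
      have := (ZMod.intCast_eq_intCast_iff _ _ _).mpr key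
      rw [hmod, hdiv] at this
      exact_mod_cast this
    rw [key2]
    by_cases hpn : p ∣ n
    · have hnp : n % p = 0 := Nat.mod_eq_zero_of_dvd hpn
      rw [hnp]
      rw [Nat.choose_self, one_mul, ih (n / p)]
      have hiff : p ^ a ∣ n / p ↔ p ^ (a+1) ∣ n := by
        rw [Nat.dvd_div_iff_mul_dvd hpn, pow_succ, mul_comm]
      have hdd : n / p / p ^ a = n / p ^ (a+1) := by
        rw [Nat.div_div_eq_div_mul, pow_succ, mul_comm]
      rw [hdd]
      by_cases hc : p ^ (a+1) ∣ n
      · rw [if_pos (hiff.mpr hc), if_pos hc]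
      · rw [if_neg (fun h => hc (hiff.mp h)), if_neg hc]
    · have hnp : n % p ≠ 0 := fun h => hpn (Nat.dvd_of_mod_eq_zero h)
      rw [Nat.choose_eq_zero_of_lt (by omega)]
      rw [if_neg (fun hdd => hpn (dvd_trans (dvd_pow_self p (Nat.succ_ne_zero a)) hdd))]
      simp

theorem stmt_14 (p : ℕ) (hp : p.Prime) (a h : ℕ) (ha : 0 < a) (hh : 0 < h)
    (m : ℤ) (hm : ¬ ((p : ℤ) ∣ m)) (d : ℤ)
    (hd1 : -(h : ℤ) + 1 ≤ d) (hd2 : d ≤ (h : ℤ) * (p : ℤ) ^ a) :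
    (∑ j ∈ Finset.range (h + 2),
        (((h + 1).choose j : ZMod p) - (m : ZMod p) * (if j = h then 1 else 0)) *
          ∑ k ∈ Finset.range (p ^ a),
            (ibinom ((h + 1) * k) ((k : ℤ) + d + (j : ℤ)) : ZMod p) * ((m : ZMod p) ^ k)⁻¹) =
      if ((p : ℤ) ^ a ∣ d + (h : ℤ)) then
        (((h + 1).choose (((d + (h : ℤ)) / (p : ℤ) ^ a).toNat + 1)) : ZMod p)
      else 0 := by
  haveI : Fact p.Prime := ⟨hp⟩
  have hm0 : (m : ZMod p) ≠ 0 := by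
    rw [Ne, ZMod.intCast_zmod_eq_zero_iff_dvd]; exact hm
  set g : ℕ → ZMod p := fun k => ((ibinom ((h+1)*k) ((k:ℤ) + d + h) : ℕ) : ZMod p) with hg
  set F : ℕ → ZMod p := fun k => ((m : ZMod p) ^ k)⁻¹ * ((m : ZMod p) * g k) with hFdef
  set S : ℕ → ZMod p := fun j => ∑ k ∈ Finset.range (p ^ a),
      (ibinom ((h + 1) * k) ((k : ℤ) + d + (j : ℤ)) : ZMod p) * ((m : ZMod p) ^ k)⁻¹ with hS
  -- Step 1: split the sum
  have hsplit : (∑ j ∈ Finset.range (h + 2),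
        (((h + 1).choose j : ZMod p) - (m : ZMod p) * (if j = h then 1 else 0)) * S j)
      = (∑ j ∈ Finset.range (h + 2), ((h + 1).choose j : ZMod p) * S j)
        - (m : ZMod p) * S h := by
    simp only [sub_mul, Finset.sum_sub_distrib]
    congr 1
    have h1 : ∀ j, ((m : ZMod p) * (if j = h then 1 else 0)) * S j
        = if j = h then (m : ZMod p) * S j else 0 := fun j => by
      by_cases hj : j = h <;> simp [hj]
    simp only [h1]
    rw [Finset.sum_ite_eq' (Finset.range (h+2)) h (fun j => (m : ZMod p) * S j),
      if_pos (Finset.mem_range.mpr (by omega))]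
  -- Step 2: Vandermonde on the first sum
  have hvand : (∑ j ∈ Finset.range (h + 2), ((h + 1).choose j : ZMod p) * S j)
      = ∑ k ∈ Finset.range (p ^ a), g (k+1) * ((m : ZMod p) ^ k)⁻¹ := by
    simp only [hS, Finset.mul_sum]
    rw [Finset.sum_comm]
    apply Finset.sum_congr rfl
    intro k _
    have inner : ∑ j ∈ Finset.range (h + 2),
        ((h + 1).choose j : ZMod p) *
          ((ibinom ((h + 1) * k) ((k : ℤ) + d + (j : ℤ)) : ZMod p) * ((m : ZMod p) ^ k)⁻¹)
        = ((∑ j ∈ Finset.range (h + 2),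
            (h + 1).choose j * ibinom ((h + 1) * k) (((k : ℤ) + d) + (j : ℤ)) : ℕ) : ZMod p)
            * ((m : ZMod p) ^ k)⁻¹ := by
      rw [Nat.cast_sum, Finset.sum_mul]
      apply Finset.sum_congr rfl
      intro j _
      push_cast
      ring
    rw [inner, ← ibinom_vander (h+1) ((h+1)*k) ((k:ℤ)+d)]
    have heq : ibinom ((h + 1) * k + (h + 1)) (((k : ℤ) + d) + ((h+1 : ℕ) : ℤ))
        = ibinom ((h + 1) * (k+1)) (((k+1 : ℕ) : ℤ) + d + h) := by
      have h1 : (h + 1) * k + (h + 1) = (h + 1) * (k + 1) := by ring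
      have h2 : (((k : ℤ) + d) + ((h+1 : ℕ) : ℤ)) = (((k+1 : ℕ) : ℤ) + d + h) := by
        push_cast; ring
      rw [h1, h2]
    rw [heq]
  -- Step 3: second sum is ∑ m * g k * inv
  have hSh : S h = ∑ k ∈ Finset.range (p ^ a), g k * ((m : ZMod p) ^ k)⁻¹ := rfl
  -- Step 4: telescoping
  have hFsucc : ∀ k, F (k+1) = g (k+1) * ((m : ZMod p) ^ k)⁻¹ := by
    intro k
    simp only [hFdef, pow_succ, mul_inv_rev]
    field_simp
  have hF0 : F 0 = 0 := by
    have : g 0 = 0 := by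
      simp only [hg, mul_zero, Nat.cast_zero, zero_add]
      unfold ibinom
      rw [if_pos (by omega)]
      rw [Nat.choose_eq_zero_of_lt (by omega)]
      simp
    simp [hFdef, this]
  have htel : (∑ k ∈ Finset.range (p ^ a), g (k+1) * ((m : ZMod p) ^ k)⁻¹)
      - (m : ZMod p) * (∑ k ∈ Finset.range (p ^ a), g k * ((m : ZMod p) ^ k)⁻¹)
      = F (p ^ a) - F 0 := by
    rw [← Finset.sum_range_sub F, Finset.mul_sum, ← Finset.sum_sub_distrib]
    apply Finset.sum_congr rfl
    intro k _
    rw [hFsucc k]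
    simp only [hFdef]
    ring
  have hFq : F (p ^ a) = g (p ^ a) := by
    simp only [hFdef]
    rw [show ((m : ZMod p)) ^ (p ^ a) = (m : ZMod p) from ZMod.pow_card_pow _]
    rw [inv_mul_cancel_left₀ hm0]
  -- Step 5: evaluate g (p^a) via Lucas
  have hdh : (0:ℤ) ≤ d + h := by omega
  set e : ℕ := (d + (h:ℤ)).toNat with he
  have hde : d + (h:ℤ) = (e : ℤ) := (Int.toNat_of_nonneg hdh).symm
  have hgq : g (p ^ a) = if ((p : ℤ) ^ a ∣ d + (h : ℤ)) then
      (((h + 1).choose (((d + (h : ℤ)) / (p : ℤ) ^ a).toNat + 1)) : ZMod p) else 0 := by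
    have hib : ibinom ((h+1) * p ^ a) (((p ^ a : ℕ) : ℤ) + d + h)
        = ((h+1) * p ^ a).choose (p ^ a + e) := by
      unfold ibinom
      rw [if_pos (by omega)]
      congr 1
      omega
    simp only [hg, hib]
    rw [lucas_pow p (h+1) a (p ^ a + e)]
    have hdvd_iff : (p ^ a ∣ p ^ a + e) ↔ ((p : ℤ) ^ a ∣ d + (h : ℤ)) := by
      rw [Nat.dvd_add_right (dvd_refl _), hde,
        show ((p:ℤ))^a = ((p^a : ℕ) : ℤ) by push_cast; ring, Int.natCast_dvd_natCast]
    have hdivval : (p ^ a + e) / p ^ a = e / p ^ a + 1 := by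
      have hq : 0 < p ^ a := pow_pos hp.pos a
      rw [add_comm, Nat.add_div_right _ hq]
    have htonat : ((d + (h : ℤ)) / (p : ℤ) ^ a).toNat = e / p ^ a := by
      rw [hde, show ((p:ℤ))^a = ((p^a : ℕ) : ℤ) by push_cast; ring,
        ← Int.natCast_div, Int.toNat_natCast]
    by_cases hc : ((p : ℤ) ^ a ∣ d + (h : ℤ))
    · rw [if_pos (hdvd_iff.mpr hc), if_pos hc, hdivval, htonat]
    · rw [if_neg (fun hh => hc (hdvd_iff.mp hh)), if_neg hc]
  calc (∑ j ∈ Finset.range (h + 2),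
        (((h + 1).choose j : ZMod p) - (m : ZMod p) * (if j = h then 1 else 0)) * S j)
      = (∑ k ∈ Finset.range (p ^ a), g (k+1) * ((m : ZMod p) ^ k)⁻¹)
        - (m : ZMod p) * (∑ k ∈ Finset.range (p ^ a), g k * ((m : ZMod p) ^ k)⁻¹) := by
        rw [hsplit, hvand, hSh]
    _ = F (p ^ a) - F 0 := htel
    _ = g (p ^ a) := by rw [hF0, hFq, sub_zero]
    _ = _ := hgq
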